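/- Let X be a nonempty compact metric space and μ a finite Borel measure on X with full support (μ(U) > 0 for every nonempty open U ⊆ X). Let u, w : X → ℝ be continuous with min u = 0, max u = l > 0 and min w = 0, and suppose argmin(u) ∩ argmin(w) ≠ ∅. For t ∈ [0,1] set h_t := min(t·l, u) + w (pointwise minimum with the constant t·l) and g(t) := ∫_X normalize(h_t) dμ. Then: (a) min h_t = 0 for all t ∈ [0,1]; (b) argmin(h_t) = argmin(u) ∩ argmin(w) for all t ∈ (0,1]; (c) g(t) = ∫_X min(t·l, u) dμ + ∫_X w dμ for all t ∈ [0,1] and g is strictly increasing on [0,1]; (d) t ↦ osc(h_t) is monotone nondecreasing on [0,1]. -/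

import Mathlib

open MeasureTheory Set

/-- The (attained) minimum of `f` on a nonempty compact space. -/
noncomputable def minF {X : Type*} (f : X → ℝ) : ℝ := sInf (Set.range f)

/-- The (attained) maximum of `f` on a nonempty compact space. -/
noncomputable def maxF {X : Type*} (f : X → ℝ) : ℝ := sSup (Set.range f)

/-- The oscillation `max f - min f`. -/
noncomputable def oscF {X : Type*} (f : X → ℝ) : ℝ := maxF f - minF f

/-- `normalize f = f - min f`. -/
noncomputable def normF {X : Type*} (f : X → ℝ) : X → ℝ := fun x => f x - minF f

/-- The minimizer set of `f`. -/
def argminF {X : Type*} (f : X → ℝ) : Set X := {x | f x = minF f}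

/-- The maximizer set of `f`. -/
def argmaxF {X : Type*} (f : X → ℝ) : Set X := {x | f x = maxF f}

section Aux

variable {X : Type*} [TopologicalSpace X] [CompactSpace X] [Nonempty X]

lemma minF_le' {f : X → ℝ} (hf : Continuous f) (x : X) : minF f ≤ f x :=
  csInf_le (isCompact_range hf).bddBelow ⟨x, rfl⟩

lemma le_maxF' {f : X → ℝ} (hf : Continuous f) (x : X) : f x ≤ maxF f :=
  le_csSup (isCompact_range hf).bddAbove ⟨x, rfl⟩

lemma minF_eq_zero' {f : X → ℝ} (h0 : ∀ x, 0 ≤ f x) {x₀ : X} (hx0 : f x₀ = 0) :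
    minF f = 0 := by
  refine le_antisymm ?_ (le_csInf (range_nonempty f) ?_)
  · exact hx0 ▸ csInf_le ⟨0, by rintro y ⟨x, rfl⟩; exact h0 x⟩ ⟨x₀, rfl⟩
  · rintro y ⟨x, rfl⟩; exact h0 x

lemma maxF_mono' {f g : X → ℝ} (hg : Continuous g) (h : ∀ x, f x ≤ g x) :
    maxF f ≤ maxF g := by
  refine csSup_le (range_nonempty f) ?_
  rintro y ⟨x, rfl⟩
  exact (h x).trans (le_maxF' hg x)

lemma cont_integrable' [MeasurableSpace X] [BorelSpace X] (μ : Measure X)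
    [IsFiniteMeasure μ] {f : X → ℝ} (hf : Continuous f) : Integrable f μ :=
  hf.integrable_of_hasCompactSupport (HasCompactSupport.of_compactSpace f)

end Aux

theorem stmt_6 {X : Type*} [MetricSpace X] [CompactSpace X] [Nonempty X]
    [MeasurableSpace X] [BorelSpace X]
    (μ : Measure X) [IsFiniteMeasure μ]
    (hfull : ∀ U : Set X, IsOpen U → U.Nonempty → 0 < μ U)
    (u w : X → ℝ) (hu : Continuous u) (hw : Continuous w)
    (l : ℝ) (hl : 0 < l) (humin : minF u = 0) (humax : maxF u = l)
    (hwmin : minF w = 0)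
    (hinter : (argminF u ∩ argminF w).Nonempty) :
    (∀ t ∈ Set.Icc (0:ℝ) 1, minF (fun x => min (t * l) (u x) + w x) = 0) ∧
    (∀ t ∈ Set.Ioc (0:ℝ) 1,
      argminF (fun x => min (t * l) (u x) + w x) = argminF u ∩ argminF w) ∧
    (∀ t ∈ Set.Icc (0:ℝ) 1,
      (∫ x, normF (fun x => min (t * l) (u x) + w x) x ∂μ) =
        (∫ x, min (t * l) (u x) ∂μ) + ∫ x, w x ∂μ) ∧
    StrictMonoOn
      (fun t => ∫ x, normF (fun x => min (t * l) (u x) + w x) x ∂μ)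
      (Set.Icc (0:ℝ) 1) ∧
    MonotoneOn (fun t => oscF (fun x => min (t * l) (u x) + w x))
      (Set.Icc (0:ℝ) 1) := by
  obtain ⟨x₀, hx₀u, hx₀w⟩ := hinter
  have hu0 : ∀ x, 0 ≤ u x := fun x => humin ▸ minF_le' hu x
  have hw0 : ∀ x, 0 ≤ w x := fun x => hwmin ▸ minF_le' hw x
  have hx₀u' : u x₀ = 0 := by simpa [argminF, humin] using hx₀u
  have hx₀w' : w x₀ = 0 := by simpa [argminF, hwmin] using hx₀w
  -- part (a)
  have hmin : ∀ t ∈ Set.Icc (0:ℝ) 1,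
      minF (fun x => min (t * l) (u x) + w x) = 0 := by
    intro t ht
    have htl : 0 ≤ t * l := mul_nonneg ht.1 hl.le
    refine minF_eq_zero' (fun x => add_nonneg (le_min htl (hu0 x)) (hw0 x)) (x₀ := x₀) ?_
    simp [hx₀u', hx₀w', min_eq_right htl]
  -- continuity of h_t
  have hcontmin : ∀ t : ℝ, Continuous (fun x => min (t * l) (u x)) :=
    fun t => continuous_const.min hu
  have hcont : ∀ t : ℝ, Continuous (fun x => min (t * l) (u x) + w x) :=
    fun t => (hcontmin t).add hw
  -- part (b)
  have hargmin : ∀ t ∈ Set.Ioc (0:ℝ) 1,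
      argminF (fun x => min (t * l) (u x) + w x) = argminF u ∩ argminF w := by
    intro t ht
    have htl : 0 < t * l := mul_pos ht.1 hl
    ext x
    simp only [argminF, mem_setOf_eq, mem_inter_iff,
      hmin t ⟨ht.1.le, ht.2⟩, humin, hwmin]
    constructor
    · intro h
      have h2 := (add_eq_zero_iff_of_nonneg (le_min htl.le (hu0 x)) (hw0 x)).1 h
      refine ⟨?_, h2.2⟩
      rcases min_eq_iff.1 h2.1 with h3 | h3
      · exact absurd h3.1 htl.ne'
      · exact h3.1
    · rintro ⟨h1, h2⟩
      simp [h1, h2, min_eq_right htl.le]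
  -- part (c)
  have hint : ∀ t ∈ Set.Icc (0:ℝ) 1,
      (∫ x, normF (fun x => min (t * l) (u x) + w x) x ∂μ) =
        (∫ x, min (t * l) (u x) ∂μ) + ∫ x, w x ∂μ := by
    intro t ht
    have : (fun x => normF (fun x => min (t * l) (u x) + w x) x) =
        fun x => min (t * l) (u x) + w x := by
      funext x; simp [normF, hmin t ht]
    rw [this]
    exact integral_add (cont_integrable' μ (hcontmin t)) (cont_integrable' μ hw)
  refine ⟨hmin, hargmin, hint, ?_, ?_⟩
  · -- strict monotonicity
    intro s hs t ht hst
    simp only [hint s hs, hint t ht]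
    have hkey : (∫ x, min (s * l) (u x) ∂μ) < ∫ x, min (t * l) (u x) ∂μ := by
      have hle : ∀ x, min (s * l) (u x) ≤ min (t * l) (u x) := fun x =>
        min_le_min (mul_le_mul_of_nonneg_right hst.le hl.le) le_rfl
      have hsub : (∫ x, min (t * l) (u x) ∂μ) - ∫ x, min (s * l) (u x) ∂μ =
          ∫ x, (min (t * l) (u x) - min (s * l) (u x)) ∂μ :=
        (integral_sub (cont_integrable' μ (hcontmin t)) (cont_integrable' μ (hcontmin s))).symm
      have hpos : 0 < ∫ x, (min (t * l) (u x) - min (s * l) (u x)) ∂μ := by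
        rw [integral_pos_iff_support_of_nonneg
          (fun x => sub_nonneg.2 (hle x))
          ((cont_integrable' μ (hcontmin t)).sub (cont_integrable' μ (hcontmin s)))]
        -- the open set where u > s*l
        have hsl : s * l < l := by
          have hs1 : s < 1 := lt_of_lt_of_le hst ht.2
          nlinarith
        obtain ⟨x₁, hx₁⟩ : ∃ x₁, u x₁ = l := by
          have := (isCompact_range hu).sSup_mem (range_nonempty u)
          rw [show sSup (Set.range u) = l from humax] at this
          obtain ⟨x₁, hx₁⟩ := this; exact ⟨x₁, hx₁⟩
        have hUopen : IsOpen {x | s * l < u x} := isOpen_lt continuous_const hu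
        have hUne : {x | s * l < u x}.Nonempty := ⟨x₁, by simp [hx₁, hsl]⟩
        have hμU := hfull _ hUopen hUne
        refine lt_of_lt_of_le hμU (measure_mono ?_)
        intro x hx
        have hx' : s * l < u x := hx
        have h1 : min (s * l) (u x) = s * l := min_eq_left hx'.le
        have h2 : s * l < min (t * l) (u x) :=
          lt_min (by nlinarith) hx'
        simp only [Function.mem_support]
        rw [h1]
        exact sub_ne_zero.2 (ne_of_gt h2)
      linarith [hsub ▸ hpos]
    linarith
  · -- oscillation monotone
    intro s hs t ht hst
    simp only [oscF, hmin s hs, hmin t ht, sub_zero]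
    refine maxF_mono' (hcont t) (fun x => ?_)
    exact add_le_add_left (min_le_min (mul_le_mul_of_nonneg_right hst hl.le) le_rfl) _
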